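/- Let (A, ∘, ρ, ⟨·,·⟩) be an irreducible Courant algebroid, meaning the only (1,1)-tensors Δ with X∘ΔZ = Δ(X∘Z) and Δ(Y∘Y) = ΔY∘Y for all X,Y,Z are the scalar multiples of the identity. Then every Courant-Nijenhuis tensor N on A satisfies N + N* = λI and N² − λN + γI = 0 for some scalars λ, γ. -/
import Mathlib


/-- On an irreducible Courant algebroid (the only (1,1)-tensors
`Δ` with `X∘ΔZ = Δ(X∘Z)` and `Δ(Y∘Y) = ΔY∘Y` are scalar multiples of the
identity), every Courant-Nijenhuis tensor `N` satisfies `N + N* = λI` and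
`N² - λN + γI = 0` for some scalars `λ, γ`. -/
theorem irreducible_courant_nijenhuis_quadratic
    {A F : Type*} [AddCommGroup A] [Module ℝ A] [AddCommGroup F] [Module ℝ F]
    (m : A →ₗ[ℝ] A →ₗ[ℝ] A)           -- the Leibniz product ∘
    (B : A →ₗ[ℝ] A →ₗ[ℝ] F)           -- the pairing ⟨·,·⟩
    (ρ : A →ₗ[ℝ] F →ₗ[ℝ] F)           -- the anchor acting on scalars
    (jacobi : ∀ X Y Z : A, m (m X Y) Z = m X (m Y Z) - m Y (m X Z))
    (hsym : ∀ X Y : A, B X Y = B Y X)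
    (hnondeg : ∀ a : A, (∀ b : A, B a b = 0) → a = 0)
    (h4 : ∀ X Y : A, ρ X (B Y Y) = (2 : ℝ) • B X (m Y Y))
    (h5 : ∀ X Y : A, ρ X (B Y Y) = (2 : ℝ) • B (m X Y) Y)
    -- irreducibility
    (hirr : ∀ Δ : A →ₗ[ℝ] A,
      (∀ X Z : A, m X (Δ Z) = Δ (m X Z)) → (∀ Y : A, Δ (m Y Y) = m (Δ Y) Y) →
      ∃ c : ℝ, ∀ x : A, Δ x = c • x)
    -- N is a Courant-Nijenhuis tensor:
    (N Ns : A →ₗ[ℝ] A)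
    (hadj : ∀ X Y : A, B (N X) Y = B X (Ns Y))
    (cN : A → A → A)
    (hcN : ∀ X Y : A, cN X Y = m (N X) Y + m X (N Y) - N (m X Y))
    (torsion_zero : ∀ X Y : A, m (N X) (N Y) - N (cN X Y) = 0)
    -- compatibility with the pairing: the contracted Courant axioms hold
    (hc4 : ∀ X Y : A, ρ (N X) (B Y Y) = (2 : ℝ) • B X (cN Y Y))
    (hc5 : ∀ X Y : A, ρ (N X) (B Y Y) = (2 : ℝ) • B (cN X Y) Y) :
    ∃ lam gam : ℝ,
      (∀ x : A, N x + Ns x = lam • x) ∧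
      (∀ x : A, N (N x) - lam • N x + gam • x = 0) := by
  -- rewrite the deformed-bracket axioms through the explicit formula
  have hc4' : ∀ X Y : A, ρ (N X) (B Y Y)
      = (2 : ℝ) • B X (m (N Y) Y + m Y (N Y) - N (m Y Y)) := by
    intro X Y; rw [hc4 X Y, hcN Y Y]
  have hc5' : ∀ X Y : A, ρ (N X) (B Y Y)
      = (2 : ℝ) • B (m (N X) Y + m X (N Y) - N (m X Y)) Y := by
    intro X Y; rw [hc5 X Y, hcN X Y]
  have tor : ∀ X Y : A,
      m (N X) (N Y) = N (m (N X) Y) + N (m X (N Y)) - N (N (m X Y)) := by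
    intro X Y
    have h := torsion_zero X Y
    rw [hcN X Y] at h
    have h' : m (N X) (N Y) = N (m (N X) Y + m X (N Y) - N (m X Y)) := by
      linear_combination (norm := module) h
    simpa [map_add, map_sub] using h'
  -- extensionality from nondegeneracy (first and second slot)
  have bext : ∀ u v : A, (∀ w : A, B u w = B v w) → u = v := by
    intro u v h
    have h0 : ∀ w : A, B (u - v) w = 0 := by
      intro w; simp [map_sub, LinearMap.sub_apply, h w]
    have := hnondeg _ h0
    exact sub_eq_zero.mp this
  have bext2 : ∀ u v : A, (∀ w : A, B w u = B w v) → u = v := by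
    intro u v h
    exact bext u v fun w => by rw [hsym u w, hsym v w, h w]
  -- cancel 2 in F and in A
  have half2 : ∀ u v : F, (2 : ℝ) • u = (2 : ℝ) • v → u = v := by
    intro u v h
    have h' := congrArg (fun z => (2 : ℝ)⁻¹ • z) h
    simpa [smul_smul] using h'
  -- polarized axiom 4
  have p4 : ∀ X a b : A, ρ X (B a b) = B X (m a b) + B X (m b a) := by
    intro X a b
    apply half2
    have h1 := h4 X (a + b)
    have h2 := h4 X a
    have h3 := h4 X b
    have hs := congrArg (ρ X) (hsym b a)
    simp only [map_add, LinearMap.add_apply] at h1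
    linear_combination (norm := module) h1 - h2 - h3 - hs
  -- polarized axiom 5
  have p5 : ∀ X a b : A, ρ X (B a b) = B (m X a) b + B (m X b) a := by
    intro X a b
    apply half2
    have h1 := h5 X (a + b)
    have h2 := h5 X a
    have h3 := h5 X b
    have hs := congrArg (ρ X) (hsym b a)
    simp only [map_add, LinearMap.add_apply] at h1
    linear_combination (norm := module) h1 - h2 - h3 - hs
  -- polarized deformed axiom 4
  have pc4 : ∀ X a b : A, ρ (N X) (B a b)
      = B X (m (N a) b + m a (N b) - N (m a b))
        + B X (m (N b) a + m b (N a) - N (m b a)) := by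
    intro X a b
    apply half2
    have h1 := hc4' X (a + b)
    have h2 := hc4' X a
    have h3 := hc4' X b
    have hs := congrArg (ρ (N X)) (hsym b a)
    simp only [map_add, map_sub, LinearMap.add_apply, LinearMap.sub_apply] at h1 h2 h3 ⊢
    linear_combination (norm := module) h1 - h2 - h3 - hs
  -- polarized deformed axiom 5
  have pc5 : ∀ X a b : A, ρ (N X) (B a b)
      = B (m (N X) a + m X (N a) - N (m X a)) b
        + B (m (N X) b + m X (N b) - N (m X b)) a := by
    intro X a b
    apply half2
    have h1 := hc5' X (a + b)
    have h2 := hc5' X a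
    have h3 := hc5' X b
    have hs := congrArg (ρ (N X)) (hsym b a)
    simp only [map_add, map_sub, LinearMap.add_apply, LinearMap.sub_apply] at h1 h2 h3 ⊢
    linear_combination (norm := module) h1 - h2 - h3 - hs
  -- (E1)  c'(a,b) + c'(b,a) = Ns(a∘b) + Ns(b∘a)
  have E1 : ∀ a b : A,
      (m (N a) b + m a (N b) - N (m a b)) + (m (N b) a + m b (N a) - N (m b a))
        = Ns (m a b) + Ns (m b a) := by
    intro a b
    apply bext2
    intro X
    have h1 := pc4 X a b
    have h2 := p4 (N X) a b
    have e1 := hadj X (m a b)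
    have e2 := hadj X (m b a)
    simp only [map_add, map_sub, LinearMap.add_apply, LinearMap.sub_apply] at h1 h2 ⊢
    linear_combination (norm := module) h2 - h1 + e1 + e2
  -- (⋆⋆)  B(t X a) b + B(t X b) a = 0  with  t X a = X∘Na − N(X∘a)
  have star : ∀ X a b : A,
      (B (m X (N a)) b - B (N (m X a)) b) + (B (m X (N b)) a - B (N (m X b)) a)
        = 0 := by
    intro X a b
    have h1 := pc5 X a b
    have h2 := p5 (N X) a b
    simp only [map_add, map_sub, LinearMap.add_apply, LinearMap.sub_apply] at h1
    linear_combination (norm := module) h2 - h1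
  -- (C1)
  have C1 : ∀ X Z W : A,
      B (m X (Ns Z)) W - B (Ns (m X Z)) W
        = B (m X (N W)) Z - B (N (m X W)) Z := by
    intro X Z W
    have e1 := p5 X (Ns Z) W
    have e2 := hadj (m X W) Z
    have e3 : B (Ns Z) W = B Z (N W) := by
      rw [hsym (Ns Z) W, ← hadj W Z, hsym (N W) Z]
    have e3' := congrArg (ρ X) e3
    have e4 := p5 X Z (N W)
    have e5 : B (Ns (m X Z)) W = B (m X Z) (N W) := by
      rw [hsym (Ns (m X Z)) W, ← hadj W (m X Z), hsym (N W) (m X Z)]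
    linear_combination (norm := module) - e1 + e2 + e3' + e4 - e5
  -- first condition for Δ = N + N*
  have goal1 : ∀ X Z : A, m X (N Z + Ns Z) = N (m X Z) + Ns (m X Z) := by
    intro X Z
    apply bext
    intro W
    have h1 := C1 X Z W
    have h2 := star X Z W
    simp only [map_add, LinearMap.add_apply]
    linear_combination (norm := module) h1 + h2
  -- diagonal of E1, halved
  have D1 : ∀ Y : A, m (N Y) Y + m Y (N Y) = N (m Y Y) + Ns (m Y Y) := by
    intro Y
    have h := E1 Y Y
    have h2 : (2 : ℝ) • (m (N Y) Y + m Y (N Y))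
        = (2 : ℝ) • (N (m Y Y) + Ns (m Y Y)) := by
      linear_combination (norm := module) h
    have h' := congrArg (fun z => (2 : ℝ)⁻¹ • z) h2
    simpa [smul_smul] using h'
  -- S : symmetrized products with Ns Y and N Y agree
  have S : ∀ Y : A, m (Ns Y) Y + m Y (Ns Y) = m (N Y) Y + m Y (N Y) := by
    intro Y
    apply bext2
    intro X
    have h1 := p4 X (Ns Y) Y
    have h2 := p4 X (N Y) Y
    have e : B (Ns Y) Y = B (N Y) Y := by
      rw [hsym (Ns Y) Y, ← hadj Y Y]
    have e' := congrArg (ρ X) e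
    simp only [map_add, LinearMap.add_apply] at h1 h2 ⊢
    linear_combination (norm := module) e' - h1 + h2
  -- D2 : Y∘(N*Y) = (NY)∘Y
  have D2 : ∀ Y : A, m Y (Ns Y) = m (N Y) Y := by
    intro Y
    have h1 := goal1 Y Y
    have h2 := D1 Y
    simp only [map_add] at h1
    linear_combination (norm := module) h1 - h2
  -- second condition for Δ = N + N*
  have goal2 : ∀ Y : A, N (m Y Y) + Ns (m Y Y) = m (N Y + Ns Y) Y := by
    intro Y
    have h1 := D1 Y
    have h2 := S Y
    have h3 := D2 Y
    simp only [map_add, LinearMap.add_apply]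
    linear_combination (norm := module) - h1 - h2 + h3
  obtain ⟨lam, hlam⟩ := hirr (N + Ns)
    (by intro X Z; simp only [LinearMap.add_apply]; exact goal1 X Z)
    (by intro Y; simp only [LinearMap.add_apply]; exact goal2 Y)
  have hlam' : ∀ x : A, N x + Ns x = lam • x := by
    intro x; simpa only [LinearMap.add_apply] using hlam x
  have hNs : ∀ x : A, Ns x = lam • x - N x := by
    intro x
    have := hlam' x
    linear_combination (norm := module) this
  -- (T')  t(NX, Y) = N (t X Y)
  have T' : ∀ X Y : A,
      m (N X) (N Y) - N (m (N X) Y) = N (m X (N Y)) - N (N (m X Y)) := by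
    intro X Y
    have h := tor X Y
    linear_combination (norm := module) h
  -- moving `N` across the pairing using N* = lam - N
  have hNpair : ∀ u v : A, B u (N v) = lam • B u v - B (N u) v := by
    intro u v
    rw [hsym u (N v), hadj v u, hNs u, map_sub, map_smul, hsym v u, hsym v (N u)]
  -- (KEY)  t(X, NZ) = lam • t X Z − N (t X Z)
  have KEY : ∀ X Z : A,
      m X (N (N Z)) - N (m X (N Z))
        = lam • (m X (N Z)) - lam • N (m X Z)
          - (N (m X (N Z)) - N (N (m X Z))) := by
    intro X Z
    apply bext
    intro W
    have s1 := star X (N Z) W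
    have s2 := star X W Z
    have s3 := star (N X) W Z
    have a1 := hNpair (m X (N W)) Z
    have a2 := hNpair (N (m X W)) Z
    have c1 : B (m (N X) (N W)) Z - B (N (m (N X) W)) Z
        = B (N (m X (N W))) Z - B (N (N (m X W))) Z := by
      have h := congrArg (fun u => (B u) Z) (T' X W)
      simpa [map_sub, LinearMap.sub_apply] using h
    have c2 : B (m (N X) (N Z)) W - B (N (m (N X) Z)) W
        = B (N (m X (N Z))) W - B (N (N (m X Z))) W := by
      have h := congrArg (fun u => (B u) W) (T' X Z)
      simpa [map_sub, LinearMap.sub_apply] using h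
    simp only [map_sub, map_smul, LinearMap.sub_apply, LinearMap.smul_apply]
    linear_combination (norm := module) s1 - a1 + a2 - lam • s2 - c1 + s3 - c2
  -- first condition for P = N² − lam N
  have GoalA : ∀ X Z : A,
      m X (N (N Z)) - lam • m X (N Z) = N (N (m X Z)) - lam • N (m X Z) := by
    intro X Z
    linear_combination (norm := module) KEY X Z
  -- diagonal facts
  have D3 : ∀ Y : A, m (N Y) Y + m Y (N Y) = lam • m Y Y := by
    intro Y
    have h1 := D1 Y
    have h2 := hlam' (m Y Y)
    linear_combination (norm := module) h1 + h2
  have B1 : ∀ Y : A,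
      (2 : ℝ) • m (N Y) (N Y) + m Y (N (N Y)) + m (N (N Y)) Y
        = (lam * lam) • m Y Y := by
    intro Y
    have h := E1 Y (N Y)
    have e1 := hNs (m Y (N Y))
    have e2 := hNs (m (N Y) Y)
    have d := D3 Y
    linear_combination (norm := module) h + e1 + e2 + lam • d
  have B2 : ∀ Y : A,
      m (N Y) (N Y) = lam • N (m Y Y) - N (N (m Y Y)) := by
    intro Y
    have h := tor Y Y
    have d := congrArg N (D3 Y)
    simp only [map_add, map_smul] at d
    linear_combination (norm := module) h + d
  -- second condition for P = N² − lam N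
  have GoalB : ∀ Y : A,
      N (N (m Y Y)) - lam • N (m Y Y)
        = m (N (N Y)) Y - lam • m (N Y) Y := by
    intro Y
    have g := GoalA Y Y
    have b1 := B1 Y
    have b2 := B2 Y
    have d := D3 Y
    linear_combination (norm := module) - b1 + 2 • b2 + g + lam • d
  obtain ⟨cc, hcc⟩ := hirr (N ∘ₗ N - lam • N)
    (by
      intro X Z
      simp only [LinearMap.sub_apply, LinearMap.comp_apply, LinearMap.smul_apply,
        map_sub, map_smul]
      exact GoalA X Z)
    (by
      intro Y
      simp only [LinearMap.sub_apply, LinearMap.comp_apply, LinearMap.smul_apply,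
        map_sub, map_smul]
      exact GoalB Y)
  refine ⟨lam, -cc, hlam', ?_⟩
  intro x
  have h := hcc x
  simp only [LinearMap.sub_apply, LinearMap.comp_apply, LinearMap.smul_apply] at h
  linear_combination (norm := module) h
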